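/- Let K ⊆ ℝⁿ be closed and suppose K is forward invariant for the constrained differential inclusion Σ. Then F(x) ⊆ T_K(x) for every x ∈ ∂K ∩ int(C). -/

import Mathlib

open MeasureTheory Filter Topology Set
open scoped RealInnerProductSpace

/-- Euclidean space ℝⁿ. -/
abbrev Euc (n : ℕ) := EuclideanSpace ℝ (Fin n)

variable {E : Type*} [NormedAddCommGroup E] [InnerProductSpace ℝ E]

/-- The contingent (Bouligand) cone to `S` at `x`:
`v` belongs to it iff there are sequences `tᵢ → 0⁺` and `vᵢ → v` with `x + tᵢ • vᵢ ∈ S`. -/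
def contingentCone (S : Set E) (x : E) : Set E :=
  {v | ∃ t : ℕ → ℝ, ∃ w : ℕ → E,
    (∀ i, 0 < t i) ∧ Tendsto t atTop (𝓝 0) ∧ Tendsto w atTop (𝓝 v) ∧
    ∀ i, x + t i • w i ∈ S}

/-- The adjacent cone to `S` at `x`:
`v` belongs to it iff for every sequence `tᵢ → 0⁺` there is `vᵢ → v` with `x + tᵢ • vᵢ ∈ S`. -/
def adjacentCone (S : Set E) (x : E) : Set E :=
  {v | ∀ t : ℕ → ℝ, (∀ i, 0 < t i) → Tendsto t atTop (𝓝 0) →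
    ∃ w : ℕ → E, Tendsto w atTop (𝓝 v) ∧ ∀ i, x + t i • w i ∈ S}

/-- The Dubovitskiy cone to `S` at `x`. -/
def dubovitskiyCone (S : Set E) (x : E) : Set E :=
  {v | ∀ t : ℕ → ℝ, ∀ w : ℕ → E, (∀ i, 0 < t i) → Tendsto t atTop (𝓝 0) →
    Tendsto w atTop (𝓝 v) → ∀ᶠ i in atTop, x + t i • w i ∈ interior S}

/-- Lower semicontinuity of a set-valued map at a point along a filter `l`. -/
def SVLowerSemicontinuousAt (F : E → Set E) (l : Filter E) (x : E) : Prop :=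
  ∀ U : Set E, IsOpen U → (F x ∩ U).Nonempty → ∀ᶠ y in l, (F y ∩ U).Nonempty

/-- Upper semicontinuity of a set-valued map at a point along a filter `l`. -/
def SVUpperSemicontinuousAt (F : E → Set E) (l : Filter E) (x : E) : Prop :=
  ∀ U : Set E, IsOpen U → F x ⊆ U → ∀ᶠ y in l, F y ⊆ U

/-- Continuity (lower and upper semicontinuity) of a set-valued map at `x` along `l`. -/
def SVContinuousAt (F : E → Set E) (l : Filter E) (x : E) : Prop :=
  SVLowerSemicontinuousAt F l x ∧ SVUpperSemicontinuousAt F l x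

/-- Continuity of a set-valued map. -/
def SVContinuous (F : E → Set E) : Prop := ∀ x, SVContinuousAt F (𝓝 x) x

/-- Local boundedness of a set-valued map. -/
def SVLocallyBounded (F : E → Set E) : Prop :=
  ∀ x : E, ∃ N ∈ 𝓝 x, ∃ M : ℝ, ∀ y ∈ N, ∀ v ∈ F y, ‖v‖ ≤ M

/-- One-sided local Lipschitz continuity of a set-valued map. -/
def OneSidedLocallyLipschitz (F : E → Set E) : Prop :=
  ∀ N : Set E, N.Nonempty → IsCompact N → ∃ k > 0, ∀ x₁ ∈ N, ∀ x₂ ∈ N,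
    ∀ w₁ ∈ F x₁, ∃ w₂ ∈ F x₂, ⟪x₁ - x₂, w₁⟫ ≤ ⟪x₁ - x₂, w₂⟫ + k * ‖x₁ - x₂‖ ^ 2

/-- The standing assumption (SA): `C` closed; `F x` nonempty, closed, convex on `C`;
`F` continuous and one-sided locally Lipschitz. -/
structure StandingAssumption (F : E → Set E) (C : Set E) : Prop where
  closed_C : IsClosed C
  nonempty_images : ∀ x ∈ C, (F x).Nonempty
  closed_images : ∀ x ∈ C, IsClosed (F x)
  convex_images : ∀ x ∈ C, Convex ℝ (F x)
  continuous : SVContinuous F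
  osLipschitz : OneSidedLocallyLipschitz F

/-- Admissible solution domains: `[0,T]` with `T ≥ 0`, or `[0,T)` with `T ∈ (0,∞]`. -/
def IsSolDomain (D : Set ℝ) : Prop :=
  (∃ T : ℝ, 0 ≤ T ∧ D = Icc 0 T) ∨ (∃ T : ℝ, 0 < T ∧ D = Ico 0 T) ∨ D = Ici 0

/-- `φ` is a solution of the constrained differential inclusion `ẋ ∈ F(x)`, `x ∈ C`,
on the domain `D`: it stays in `C` and is a locally absolutely continuous arc whose
derivative is an integrable selection of `F ∘ φ` almost everywhere. -/
def IsSolution (F : E → Set E) (C : Set E) (D : Set ℝ) (φ : ℝ → E) : Prop :=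
  IsSolDomain D ∧ (∀ t ∈ D, φ t ∈ C) ∧
  ∃ g : ℝ → E,
    (∀ᵐ t ∂(volume.restrict D), g t ∈ F (φ t)) ∧
    ∀ t ∈ D, IntervalIntegrable g volume 0 t ∧ φ t = φ 0 + ∫ s in (0:ℝ)..t, g s

/-- Forward invariance of `K` for the constrained differential inclusion. -/
def ForwardInvariant (F : E → Set E) (C K : Set E) : Prop :=
  ∀ D : Set ℝ, ∀ φ : ℝ → E, IsSolution F C D φ → φ 0 ∈ K → ∀ t ∈ D, φ t ∈ K

/-- The set 𝒫 of critical points: points of `∂K ∩ ∂C` every neighborhood of which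
meets `C \ K`. -/
def critSet (K C : Set E) : Set E :=
  {x | x ∈ frontier K ∩ frontier C ∧ ∀ N ∈ 𝓝 x, (N ∩ (C \ K)).Nonempty}

/-- The set of initial speeds `F_φ(x)` of an arc `φ` at `x`. -/
def initialSpeeds (φ : ℝ → E) (x : E) : Set E :=
  {v | ∃ t : ℕ → ℝ, (∀ i, 0 < t i) ∧ Tendsto t atTop (𝓝 0) ∧
    Tendsto (fun i => (t i)⁻¹ • (φ (t i) - x)) atTop (𝓝 v)}

/-- The metric projection of `y` onto `S`. -/
def projSet (S : Set E) (y : E) : Set E := {z ∈ S | dist y z = Metric.infDist y S}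

/-- `φ` leaves `K` immediately: for some `T > 0`, `φ(t) ∈ C \ K` on `(0,T]`. -/
def LeavesImmediately (K C : Set E) (D : Set ℝ) (φ : ℝ → E) : Prop :=
  ∃ T > 0, Ioc 0 T ⊆ D ∧ ∀ t ∈ Ioc 0 T, φ t ∈ C \ K

/-- Property (★): for some `T > 0`, `Proj_{∂K}(φ(t)) ∩ int C ≠ ∅` on `(0,T]`. -/
def PropStar (K C : Set E) (D : Set ℝ) (φ : ℝ → E) : Prop :=
  ∃ T > 0, Ioc 0 T ⊆ D ∧
    ∀ t ∈ Ioc 0 T, (projSet (frontier K) (φ t) ∩ interior C).Nonempty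

/-- Euclidean norm of the concatenated vector `(v₁, v₂) ∈ ℝ²ⁿ`. -/
noncomputable def pairNorm (v₁ v₂ : E) : ℝ := Real.sqrt (‖v₁‖ ^ 2 + ‖v₂‖ ^ 2)

/-- Assumption 1: `F(x) ⊆ T_K(x)` on 𝒫. -/
def Assumption1 (F : E → Set E) (K C : Set E) : Prop :=
  ∀ x ∈ critSet K C, F x ⊆ contingentCone K x

/-- Assumption 2: `F(x) ∩ T_{∂K ∩ ∂C}(x) = ∅` on 𝒫. -/
def Assumption2 (F : E → Set E) (K C : Set E) : Prop :=
  ∀ x ∈ critSet K C, F x ∩ contingentCone (frontier K ∩ frontier C) x = ∅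

/-- Assumption 3 (transversality) at a point `x`. -/
def Assumption3At (K C : Set E) (x : E) : Prop :=
  contingentCone (frontier K) x = adjacentCone (frontier K) x ∧
  contingentCone C x = adjacentCone C x ∧
  ∃ N ∈ 𝓝 x, ∃ c > 0, ∃ α ∈ Ico (0:ℝ) 1,
    ∀ x₁ ∈ (frontier K \ C) ∩ N, ∀ x₂ ∈ (frontier C \ frontier K) ∩ N,
      ∃ v₁ ∈ contingentCone (frontier K) x₁, ∃ v₂ ∈ contingentCone C x₂,
        pairNorm v₁ v₂ ≤ c * ‖x₁ - x₂‖ ∧ ‖(x₂ - x₁) - (v₁ - v₂)‖ ≤ α * ‖x₁ - x₂‖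

/-- Assumption 3 (transversality) on 𝒫. -/
def Assumption3 (K C : Set E) : Prop := ∀ x ∈ critSet K C, Assumption3At K C x

/-- The transversality condition (◇) for a pair of sets at `x₀`. -/
def TransversalAt (K₁ K₂ : Set E) (x₀ : E) : Prop :=
  ∃ N ∈ 𝓝 x₀, ∃ c > 0, ∃ α ∈ Ico (0:ℝ) 1,
    ∀ x₁ ∈ (frontier K₁ \ K₂) ∩ N, ∀ x₂ ∈ (frontier K₂ \ K₁) ∩ N,
      ∃ v₁ ∈ contingentCone K₁ x₁, ∃ v₂ ∈ contingentCone K₂ x₂,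
        pairNorm v₁ v₂ ≤ c * ‖x₁ - x₂‖ ∧ ‖(x₂ - x₁) - (v₁ - v₂)‖ ≤ α * ‖x₁ - x₂‖

variable {E : Type*} [NormedAddCommGroup E] [InnerProductSpace ℝ E]

/-- Choice-based metric projection onto a set. -/
noncomputable def cproj (S : Set E) (v : E) : E := by
  classical exact if h : ∃ p ∈ S, dist v p = Metric.infDist v S then h.choose else v

lemma cproj_of_exists {S : Set E} {v : E} (h : ∃ p ∈ S, dist v p = Metric.infDist v S) :
    cproj S v ∈ S ∧ dist v (cproj S v) = Metric.infDist v S := by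
  classical
  rw [cproj]
  simp only [dif_pos h]
  exact ⟨h.choose_spec.1, h.choose_spec.2⟩

lemma cproj_spec {S : Set E} (v : E) [ProperSpace E] (hS : IsClosed S) (hne : S.Nonempty) :
    cproj S v ∈ S ∧ dist v (cproj S v) = Metric.infDist v S := by
  obtain ⟨p, hp, hd⟩ := hS.exists_infDist_eq_dist hne v
  exact cproj_of_exists ⟨p, hp, hd.symm⟩

lemma cproj_self {S : Set E} {v : E} (hv : v ∈ S) : cproj S v = v := by
  have h : ∃ p ∈ S, dist v p = Metric.infDist v S :=
    ⟨v, hv, by simp [Metric.infDist_zero_of_mem hv]⟩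
  have := (cproj_of_exists h).2
  rw [Metric.infDist_zero_of_mem hv, dist_eq_zero] at this
  exact this.symm

/-- Quadratic estimate: points of a convex set that almost minimize distance to `v`
are close to each other. -/
lemma convex_quad_est {S : Set E} (hconv : Convex ℝ S) {p q v : E}
    (hp : p ∈ S) (hq : q ∈ S) :
    dist p q ^ 2 ≤ 2 * (dist v p ^ 2 + dist v q ^ 2) - 4 * Metric.infDist v S ^ 2 := by
  have hm : midpoint ℝ p q ∈ S := hconv.segment_subset hp hq (midpoint_mem_segment p q)
  have hd : Metric.infDist v S ≤ dist v (midpoint ℝ p q) :=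
    Metric.infDist_le_dist_of_mem hm
  have hd0 : 0 ≤ Metric.infDist v S := Metric.infDist_nonneg
  have hpar : ‖(v - p) + (v - q)‖ ^ 2 + ‖(v - p) - (v - q)‖ ^ 2
      = 2 * (‖v - p‖ ^ 2 + ‖v - q‖ ^ 2) := by
    have := parallelogram_law_with_norm ℝ (v - p) (v - q)
    nlinarith [this]
  have h1 : (v - p) + (v - q) = (2 : ℝ) • (v - midpoint ℝ p q) := by
    rw [midpoint_eq_smul_add, invOf_eq_inv]
    module
  have h2 : (v - p) - (v - q) = q - p := by abel
  rw [h1, h2] at hpar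
  rw [norm_smul] at hpar
  have hqp : dist p q = ‖q - p‖ := by rw [dist_comm, dist_eq_norm]
  have hvp : dist v p = ‖v - p‖ := dist_eq_norm _ _
  have hvq : dist v q = ‖v - q‖ := dist_eq_norm _ _
  have hvm : dist v (midpoint ℝ p q) = ‖v - midpoint ℝ p q‖ := dist_eq_norm _ _
  simp only [Real.norm_ofNat] at hpar
  rw [hvm] at hd
  rw [hqp, hvp, hvq]
  nlinarith [hpar, pow_le_pow_left₀ hd0 hd 2]
/-- Continuity of the projection selection `y ↦ cproj (F y) v` at a point where `F` is
continuous with nonempty closed convex value, and nearby values are nonempty and closed. -/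
lemma cprojF_continuousAt [ProperSpace E] {F : E → Set E} {v x₀ : E}
    (hc : SVContinuousAt F (𝓝 x₀) x₀)
    (hloc : ∀ᶠ y in 𝓝 x₀, (F y).Nonempty ∧ IsClosed (F y))
    (hne : (F x₀).Nonempty) (hcl : IsClosed (F x₀)) (hcv : Convex ℝ (F x₀)) :
    ContinuousAt (fun y => cproj (F y) v) x₀ := by
  obtain ⟨hls, hus⟩ := hc
  set p₀ := cproj (F x₀) v with hp₀
  obtain ⟨hp₀mem, hp₀dist⟩ := cproj_spec v hcl hne
  set d₀ := Metric.infDist v (F x₀) with hd₀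
  have hd₀0 : 0 ≤ d₀ := Metric.infDist_nonneg
  rw [ContinuousAt, Metric.tendsto_nhds]
  intro ε hε
  set η : ℝ := min 1 (min (ε / 4) (ε ^ 2 / (256 * (d₀ + 1)))) with hη
  have hη0 : 0 < η := by
    apply lt_min one_pos
    apply lt_min (by linarith)
    positivity
  have hη1 : η ≤ 1 := min_le_left _ _
  have hηε : η ≤ ε / 4 := le_trans (min_le_right _ _) (min_le_left _ _)
  have hηq : η ≤ ε ^ 2 / (256 * (d₀ + 1)) := le_trans (min_le_right _ _) (min_le_right _ _)
  -- Event 1 : from lower semicontinuity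
  have e1 : ∀ᶠ y in 𝓝 x₀, (F y ∩ Metric.ball p₀ η).Nonempty :=
    hls _ Metric.isOpen_ball ⟨p₀, hp₀mem, Metric.mem_ball_self hη0⟩
  -- Event 2 : from upper semicontinuity
  have e2 : ∀ᶠ y in 𝓝 x₀, F y ⊆ {z | Metric.infDist z (F x₀) < η} := by
    apply hus
    · exact isOpen_lt (Metric.continuous_infDist_pt _) continuous_const
    · intro z hz
      simpa [Metric.infDist_zero_of_mem hz] using hη0
  filter_upwards [e1, e2, hloc] with y h1 h2 ⟨hyne, hycl⟩
  obtain ⟨hpmem, hpdist⟩ := cproj_spec v hycl hyne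
  set p := cproj (F y) v
  -- infDist v (F y) ≤ d₀ + η
  obtain ⟨z, hzF, hzball⟩ := h1
  have hinf : dist v p ≤ d₀ + η := by
    rw [hpdist]
    calc Metric.infDist v (F y) ≤ dist v z := Metric.infDist_le_dist_of_mem hzF
    _ ≤ dist v p₀ + dist p₀ z := dist_triangle _ _ _
    _ ≤ d₀ + η := by
        rw [dist_comm p₀ z]
        exact add_le_add hp₀dist.le (Metric.mem_ball.mp hzball).le
  -- find q ∈ F x₀ close to p
  have hq' : Metric.infDist p (F x₀) < η := h2 hpmem
  obtain ⟨q, hqF, hqd⟩ := (Metric.infDist_lt_iff hne).mp hq'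
  have hvq : dist v q ≤ d₀ + 2 * η := by
    calc dist v q ≤ dist v p + dist p q := dist_triangle _ _ _
    _ ≤ (d₀ + η) + η := add_le_add hinf hqd.le
    _ = d₀ + 2 * η := by ring
  -- quadratic estimate
  have hquad := convex_quad_est hcv hp₀mem hqF (v := v)
  have hkey : dist p₀ q ^ 2 ≤ 8 * η * d₀ + 8 * η ^ 2 := by
    have hvq2 : dist v q ^ 2 ≤ (d₀ + 2 * η) ^ 2 :=
      pow_le_pow_left₀ dist_nonneg hvq 2
    have hvp₀ : dist v p₀ = d₀ := hp₀dist
    nlinarith [hquad]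
  have hsqrt : dist p₀ q ≤ ε / 2 := by
    have h8 : 8 * η * d₀ + 8 * η ^ 2 ≤ (ε / 2) ^ 2 := by
      have : η * (d₀ + η) ≤ η * (d₀ + 1) := by nlinarith
      have h2' : η * (d₀ + 1) ≤ ε ^ 2 / 256 := by
        have hpos : (0:ℝ) < d₀ + 1 := by linarith
        have hmul := mul_le_mul_of_nonneg_right hηq hpos.le
        have heq : ε ^ 2 / (256 * (d₀ + 1)) * (d₀ + 1) = ε ^ 2 / 256 := by
          field_simp
        linarith [heq ▸ hmul]
      nlinarith
    nlinarith [hkey, dist_nonneg (x := p₀) (y := q), sq_nonneg (dist p₀ q - ε / 2),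
      pow_pos hε 2]
  have : dist p p₀ ≤ η + ε / 2 := by
    calc dist p p₀ ≤ dist p q + dist q p₀ := dist_triangle _ _ _
    _ ≤ η + ε / 2 := add_le_add hqd.le (by rwa [dist_comm])
  calc dist p p₀ ≤ η + ε / 2 := this
  _ < ε := by linarith [hηε, hε]
/-! ### Euler polygon machinery -/

/-- Euler scheme nodes. -/
noncomputable def eulerNodes {m : ℕ} (f : Euc m → Euc m) (x : Euc m) (h : ℝ) : ℕ → Euc m
  | 0 => x
  | k + 1 => eulerNodes f x h k + h • f (eulerNodes f x h k)

/-- Index of the Euler node relevant at time `s`, capped at `n`. -/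
noncomputable def eulerIdx (h : ℝ) (n : ℕ) (s : ℝ) : ℕ := min n ⌊s / h⌋₊

/-- The piecewise-constant derivative of the Euler polygon. -/
noncomputable def eulerG {m : ℕ} (f : Euc m → Euc m) (x : Euc m) (h : ℝ) (n : ℕ) (s : ℝ) :
    Euc m := f (eulerNodes f x h (eulerIdx h n s))

lemma eulerIdx_monotone {h : ℝ} (hh : 0 < h) (n : ℕ) : Monotone (eulerIdx h n) := by
  intro a b hab
  exact min_le_min le_rfl (Nat.floor_mono (by gcongr))

lemma eulerIdx_le {h : ℝ} (n : ℕ) (s : ℝ) : eulerIdx h n s ≤ n := min_le_left _ _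

lemma eulerG_measurable {m : ℕ} (f : Euc m → Euc m) (x : Euc m) {h : ℝ} (hh : 0 < h) (n : ℕ) :
    Measurable (eulerG f x h n) := by
  have : eulerG f x h n = (fun k => f (eulerNodes f x h k)) ∘ (eulerIdx h n) := rfl
  rw [this]
  exact measurable_from_top.comp (eulerIdx_monotone hh n).measurable

lemma eulerNodes_dist {m : ℕ} {f : Euc m → Euc m} {x : Euc m} {r M h : ℝ}
    (hM : ∀ y ∈ Metric.closedBall x r, ‖f y‖ ≤ M) (hh : 0 < h) (hM0 : 0 ≤ M) {n : ℕ}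
    (hr : ((n : ℝ) + 1) * (h * M) ≤ r) :
    ∀ k, k ≤ n + 1 → ‖eulerNodes f x h k - x‖ ≤ (k : ℝ) * (h * M) := by
  intro k
  induction k with
  | zero => simp [eulerNodes]
  | succ k ih =>
    intro hk
    have hk' : k ≤ n + 1 := Nat.le_of_succ_le hk
    have hkn : (k : ℝ) ≤ (n : ℝ) + 1 := by exact_mod_cast hk'
    have hb := ih hk'
    have hmem : eulerNodes f x h k ∈ Metric.closedBall x r := by
      rw [Metric.mem_closedBall, dist_eq_norm]
      calc ‖eulerNodes f x h k - x‖ ≤ (k : ℝ) * (h * M) := hb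
      _ ≤ ((n : ℝ) + 1) * (h * M) := by
          apply mul_le_mul_of_nonneg_right hkn (by positivity)
      _ ≤ r := hr
    have : eulerNodes f x h (k + 1) - x
        = (eulerNodes f x h k - x) + h • f (eulerNodes f x h k) := by
      simp [eulerNodes]; abel
    rw [this]
    calc ‖(eulerNodes f x h k - x) + h • f (eulerNodes f x h k)‖
        ≤ ‖eulerNodes f x h k - x‖ + ‖h • f (eulerNodes f x h k)‖ := norm_add_le _ _
    _ ≤ (k : ℝ) * (h * M) + h * M := by
        apply add_le_add hb
        rw [norm_smul, Real.norm_eq_abs, abs_of_pos hh]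
        exact mul_le_mul_of_nonneg_left (hM _ hmem) hh.le
    _ = ((k : ℕ) + 1 : ℕ) * (h * M) := by push_cast; ring
set_option maxHeartbeats 1000000 in
/-- Main construction: a local solution starting at an interior point of `C`
whose velocity stays `ε`-close to a prescribed `v ∈ F x`. -/
lemma exists_good_solution {m : ℕ} {F : Euc m → Set (Euc m)} {C : Set (Euc m)} {x v : Euc m}
    (hSA : StandingAssumption F C) (hxC : x ∈ interior C) (hv : v ∈ F x)
    {ε : ℝ} (hε : 0 < ε) :
    ∃ T > 0, ∃ φ : ℝ → Euc m, IsSolution F C (Icc 0 T) φ ∧ φ 0 = x ∧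
      ∀ t ∈ Icc 0 T, ‖φ t - (x + t • v)‖ ≤ ε * t := by
  classical
  have hxc : x ∈ C := interior_subset hxC
  set f : Euc m → Euc m := fun y => cproj (F y) v with hf
  -- a ball around x inside the interior of C
  obtain ⟨r₁, hr₁0, hball₁⟩ := Metric.isOpen_iff.mp isOpen_interior x hxC
  have hsubC : Metric.ball x r₁ ⊆ C := fun y hy => interior_subset (hball₁ hy)
  -- continuity of the selection f on that ball
  have hcont : ∀ y₀ ∈ Metric.ball x r₁, ContinuousAt f y₀ := by
    intro y₀ hy₀
    have hev : ∀ᶠ y in 𝓝 y₀, (F y).Nonempty ∧ IsClosed (F y) := by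
      filter_upwards [Metric.isOpen_ball.eventually_mem hy₀] with y hy
      exact ⟨hSA.nonempty_images y (hsubC hy), hSA.closed_images y (hsubC hy)⟩
    exact cprojF_continuousAt (hSA.continuous y₀) hev
      (hSA.nonempty_images y₀ (hsubC hy₀)) (hSA.closed_images y₀ (hsubC hy₀))
      (hSA.convex_images y₀ (hsubC hy₀))
  have hfx : f x = v := cproj_self hv
  have hfmem : ∀ y ∈ Metric.ball x r₁, f y ∈ F y := fun y hy =>
    (cproj_spec v (hSA.closed_images y (hsubC hy)) (hSA.nonempty_images y (hsubC hy))).1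
  -- choose a radius r on which ‖f - v‖ ≤ min ε 1
  set ε' : ℝ := min ε 1 with hε'
  have hε'0 : 0 < ε' := lt_min hε one_pos
  obtain ⟨δ, hδ0, hδ⟩ := Metric.continuousAt_iff.mp (hcont x (Metric.mem_ball_self hr₁0)) ε' hε'0
  set r : ℝ := min (δ / 2) (r₁ / 2) with hr
  have hr0 : 0 < r := lt_min (by linarith) (by linarith)
  have hrball : Metric.closedBall x r ⊆ Metric.ball x r₁ := by
    apply Metric.closedBall_subset_ball
    calc r ≤ r₁ / 2 := min_le_right _ _
    _ < r₁ := by linarith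
  have hfb : ∀ y ∈ Metric.closedBall x r, ‖f y - v‖ ≤ ε' := by
    intro y hy
    have : dist y x < δ := by
      calc dist y x ≤ r := Metric.mem_closedBall.mp hy
      _ ≤ δ / 2 := min_le_left _ _
      _ < δ := by linarith
    have := hδ this
    rw [hfx, dist_eq_norm] at this
    exact this.le
  set M : ℝ := ‖v‖ + 1 with hM
  have hM1 : 1 ≤ M := by have := norm_nonneg v; linarith
  have hM0 : 0 < M := by linarith
  have hfM : ∀ y ∈ Metric.closedBall x r, ‖f y‖ ≤ M := by
    intro y hy
    have h1 : ‖f y‖ - ‖v‖ ≤ ‖f y - v‖ := norm_sub_norm_le _ _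
    have h2 : ε' ≤ 1 := min_le_right _ _
    have h3 := hfb y hy
    rw [hM]; linarith
  set T : ℝ := r / (M + 1) with hT
  have hT0 : 0 < T := by positivity
  have hTM1 : T * (M + 1) = r := by rw [hT]; field_simp
  have hTM : T * M ≤ r := by nlinarith
  have hTr : T ≤ r := by nlinarith
  -- Euler data
  set h : ℕ → ℝ := fun k => T / (k + 1) with hdefh
  have hh0 : ∀ k : ℕ, 0 < h k := fun k => by positivity
  have hhT : ∀ k : ℕ, ((k : ℝ) + 1) * h k = T := fun k => by
    rw [hdefh]; field_simp
  set Y : ℕ → ℕ → Euc m := fun k => eulerNodes f x (h k) with hY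
  set G : ℕ → ℝ → Euc m := fun k => eulerG f x (h k) k with hG
  set Φ : ℕ → ℝ → Euc m := fun k t => x + ∫ s in (0:ℝ)..t, G k s with hΦ
  -- nodes stay in the ball
  have hYball : ∀ k : ℕ, ∀ j ≤ k + 1, Y k j ∈ Metric.closedBall x r := by
    intro k j hj
    have hrk : ((k : ℝ) + 1) * (h k * M) ≤ r := by
      rw [← mul_assoc, hhT k]; exact hTM
    have := eulerNodes_dist hfM (hh0 k) hM0.le hrk j hj
    rw [Metric.mem_closedBall, dist_eq_norm]
    calc ‖Y k j - x‖ ≤ (j : ℝ) * (h k * M) := this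
    _ ≤ ((k : ℝ) + 1) * (h k * M) := by
        apply mul_le_mul_of_nonneg_right (by exact_mod_cast hj) (by positivity)
    _ ≤ r := hrk
  -- the piecewise derivative is within ε' of v, and bounded by M
  have hGv : ∀ k : ℕ, ∀ s : ℝ, ‖G k s - v‖ ≤ ε' := by
    intro k s
    exact hfb _ (hYball k _ (le_trans (eulerIdx_le k s) (Nat.le_succ k)))
  have hGM : ∀ k : ℕ, ∀ s : ℝ, ‖G k s‖ ≤ M := by
    intro k s
    exact hfM _ (hYball k _ (le_trans (eulerIdx_le k s) (Nat.le_succ k)))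
  have hGmeas : ∀ k : ℕ, Measurable (G k) := fun k => eulerG_measurable f x (hh0 k) k
  have hGint : ∀ k : ℕ, ∀ a b : ℝ, IntervalIntegrable (G k) volume a b := by
    intro k a b
    apply (intervalIntegrable_const (c := M)).mono_fun
      ((hGmeas k).aestronglyMeasurable)
    apply Filter.Eventually.of_forall
    intro s
    rw [Real.norm_eq_abs, abs_of_pos hM0]
    exact hGM k s
  -- Lipschitz bound for the Euler polygons
  have hΦlip : ∀ k : ℕ, ∀ a b : ℝ, ‖Φ k a - Φ k b‖ ≤ M * |a - b| := by
    intro k a b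
    have hsub : Φ k a - Φ k b = ∫ s in b..a, G k s := by
      rw [hΦ]
      simp only [add_sub_add_left_eq_sub]
      exact intervalIntegral.integral_interval_sub_left (hGint k 0 a) (hGint k 0 b)
    rw [hsub]
    have := intervalIntegral.norm_integral_le_of_norm_le_const
      (C := M) (a := b) (b := a) (f := G k) (fun s _ => hGM k s)
    exact this
  -- velocity estimate for the Euler polygons
  have hΦest : ∀ k : ℕ, ∀ t : ℝ, 0 ≤ t → ‖Φ k t - (x + t • v)‖ ≤ ε' * t := by
    intro k t ht
    have hsub : Φ k t - (x + t • v) = ∫ s in (0:ℝ)..t, (G k s - v) := by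
      rw [hΦ]
      rw [intervalIntegral.integral_sub (hGint k 0 t) (intervalIntegrable_const (c := v))]
      rw [intervalIntegral.integral_const]
      simp only [sub_zero]
      abel
    rw [hsub]
    have := intervalIntegral.norm_integral_le_of_norm_le_const
      (C := ε') (a := 0) (b := t) (f := fun s => G k s - v) (fun s _ => hGv k s)
    rwa [sub_zero, abs_of_nonneg ht] at this
  have hΦx : ∀ k : ℕ, ∀ t : ℝ, 0 ≤ t → ‖Φ k t - x‖ ≤ M * t := by
    intro k t ht
    have h1 := hΦlip k t 0
    have h2 : Φ k 0 = x := by rw [hΦ]; simp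
    rw [h2, sub_zero, abs_of_nonneg ht] at h1
    exact h1
  -- node identity : Φ k (j * h k) = Y k j
  have hnode : ∀ k : ℕ, ∀ j ≤ k + 1, Φ k ((j : ℝ) * h k) = Y k j := by
    intro k j
    induction j with
    | zero => intro _; rw [hΦ]; simp [hY, eulerNodes]
    | succ j ih =>
      intro hj
      have hjk : j ≤ k := Nat.lt_succ_iff.mp hj
      have hprev := ih (le_trans (Nat.le_succ j) hj)
      have hstep : ∫ s in ((j:ℝ) * h k)..(((j:ℝ) + 1) * h k), G k s
          = (h k) • f (Y k j) := by
        have hle : (j:ℝ) * h k ≤ ((j:ℝ) + 1) * h k := by nlinarith [hh0 k]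
        have hae : ∀ᵐ s ∂(volume : Measure ℝ),
            s ∈ Set.uIoc ((j:ℝ) * h k) (((j:ℝ) + 1) * h k) → G k s = f (Y k j) := by
          rw [ae_iff]
          refine measure_mono_null ?_ (measure_singleton ((((j:ℝ) + 1) * h k)))
          intro s hs
          simp only [Set.mem_setOf_eq, Classical.not_imp] at hs
          obtain ⟨hsI, hsne⟩ := hs
          rw [Set.uIoc_of_le hle] at hsI
          by_contra hne'
          have hslt : s < ((j:ℝ) + 1) * h k := lt_of_le_of_ne hsI.2 (by
            intro hcon; exact hne' (by rw [Set.mem_singleton_iff]; exact hcon))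
          have hfloor : ⌊s / h k⌋₊ = j := by
            have hs0 : 0 ≤ s / h k := by
              apply div_nonneg _ (hh0 k).le
              have : (0:ℝ) ≤ (j:ℝ) * h k := by positivity
              linarith [hsI.1]
            rw [Nat.floor_eq_iff (by exact_mod_cast hs0)]
            constructor
            · rw [le_div_iff₀ (hh0 k)]; exact le_of_lt hsI.1
            · rw [div_lt_iff₀ (hh0 k)]; exact_mod_cast hslt
          have hidx : eulerIdx (h k) k s = j := by
            rw [eulerIdx, hfloor]
            exact min_eq_right hjk
          apply hsne
          show f (eulerNodes f x (h k) (eulerIdx (h k) k s)) = f (Y k j)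
          rw [hidx]
        rw [intervalIntegral.integral_congr_ae hae, intervalIntegral.integral_const]
        congr 1
        ring
      have hΦdiff : Φ k (((j:ℝ) + 1) * h k) - Φ k ((j:ℝ) * h k)
          = ∫ s in ((j:ℝ) * h k)..(((j:ℝ) + 1) * h k), G k s := by
        rw [hΦ]
        simp only [add_sub_add_left_eq_sub]
        exact intervalIntegral.integral_interval_sub_left (hGint k 0 _) (hGint k 0 _)
      have : Φ k (((j:ℝ) + 1) * h k) = Y k j + (h k) • f (Y k j) := by
        have := hΦdiff
        rw [hstep, hprev] at this
        have h2 : Φ k (((j:ℝ)+1) * h k) = Φ k (((j:ℝ)+1) * h k) - Y k j + Y k j := by abel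
        rw [h2, this]; abel
      have hcast : ((j + 1 : ℕ) : ℝ) = (j : ℝ) + 1 := by push_cast; ring
      rw [hcast, this]
      rw [hY]
      show Y k j + h k • f (Y k j) = eulerNodes f x (h k) (j + 1)
      simp [eulerNodes, hY]
  -- gap between polygon and current node
  have hgap : ∀ k : ℕ, ∀ s ∈ Icc (0:ℝ) T, ‖Φ k s - Y k (eulerIdx (h k) k s)‖ ≤ M * h k := by
    intro k s hs
    set j := eulerIdx (h k) k s with hj
    have hjk1 : j ≤ k + 1 := le_trans (eulerIdx_le k s) (Nat.le_succ k)
    have hYj : Y k j = Φ k ((j:ℝ) * h k) := (hnode k j hjk1).symm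
    have hdist : |s - (j:ℝ) * h k| ≤ h k := by
      have hs0 : 0 ≤ s := hs.1
      have hsh0 : 0 ≤ s / h k := div_nonneg hs0 (hh0 k).le
      have hdm : s / h k * h k = s := div_mul_cancel₀ s (ne_of_gt (hh0 k))
      rcases le_or_gt (⌊s / h k⌋₊) k with hcase | hcase
      · have hjf : j = ⌊s / h k⌋₊ := min_eq_right hcase
        have hfl : ((⌊s / h k⌋₊ : ℝ)) * h k ≤ s := by
          have h1 := mul_le_mul_of_nonneg_right (Nat.floor_le hsh0) (hh0 k).le
          linarith [hdm]
        have hfu : s < ((⌊s / h k⌋₊ : ℝ) + 1) * h k := by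
          have h1 := mul_lt_mul_of_pos_right (Nat.lt_floor_add_one (s / h k)) (hh0 k)
          linarith [hdm]
        rw [hjf]
        rw [abs_of_nonneg (by linarith)]
        nlinarith
      · have hjf : j = k := min_eq_left (Nat.le_of_lt hcase)
        have h1 : ((k:ℝ) + 1) ≤ s / h k := by
          have h1' : (k + 1 : ℕ) ≤ ⌊s / h k⌋₊ := hcase
          have h1'' := (Nat.le_floor_iff hsh0).mp h1'
          exact_mod_cast h1''
        have h2 : T ≤ s := by
          have h2' := mul_le_mul_of_nonneg_right h1 (hh0 k).le
          rw [hdm, hhT k] at h2'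
          exact h2'
        have hsT : s = T := le_antisymm hs.2 h2
        have hfin : s - (j:ℝ) * h k = h k := by
          rw [hjf, hsT, ← hhT k]; ring
        rw [hfin, abs_of_pos (hh0 k)]
    calc ‖Φ k s - Y k j‖ = ‖Φ k s - Φ k ((j:ℝ) * h k)‖ := by rw [hYj]
    _ ≤ M * |s - (j:ℝ) * h k| := hΦlip k _ _
    _ ≤ M * h k := mul_le_mul_of_nonneg_left hdist hM0.le
  -- compactness: a subsequence converging pointwise at (clamped) rational times
  set clamp : ℝ → ℝ := fun t => max 0 (min T t) with hclamp
  have hclamp_mem : ∀ t, clamp t ∈ Icc (0:ℝ) T := by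
    intro t
    constructor
    · exact le_max_left _ _
    · apply max_le hT0.le (min_le_left _ _)
  have hclamp_id : ∀ t ∈ Icc (0:ℝ) T, clamp t = t := by
    intro t ht
    rw [hclamp]
    simp only []
    rw [min_eq_right ht.2, max_eq_right ht.1]
  have hclamp_lip : ∀ a b : ℝ, |clamp a - clamp b| ≤ |a - b| := by
    intro a b
    rw [hclamp]
    simp only []
    calc |max 0 (min T a) - max 0 (min T b)|
        = |max (min T a) 0 - max (min T b) 0| := by rw [max_comm 0 _, max_comm 0 _]
    _ ≤ |min T a - min T b| := abs_max_sub_max_le_abs _ _ _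
    _ ≤ max |T - T| |a - b| := abs_min_sub_min_le_max _ _ _ _
    _ = |a - b| := by simp
  set u : ℕ → (ℚ → Euc m) := fun k q => Φ k (clamp (q : ℝ)) with hu
  have humem : ∀ k, u k ∈ {w : ℚ → Euc m | ∀ q, w q ∈ Metric.closedBall x r} := by
    intro k q
    rw [Metric.mem_closedBall, dist_eq_norm]
    calc ‖Φ k (clamp (q:ℝ)) - x‖ ≤ M * clamp (q:ℝ) := hΦx k _ (hclamp_mem _).1
    _ ≤ M * T := mul_le_mul_of_nonneg_left (hclamp_mem _).2 hM0.le
    _ ≤ r := by nlinarith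
  have hcomp : IsCompact {w : ℚ → Euc m | ∀ q, w q ∈ Metric.closedBall x r} :=
    isCompact_pi_infinite (fun q => isCompact_closedBall x r)
  obtain ⟨U, hU, σ, hσmono, hσtend⟩ := hcomp.tendsto_subseq humem
  have hcomp2 : ∀ q : ℚ, Tendsto (fun j => u (σ j) q) atTop (𝓝 (U q)) := by
    rw [tendsto_pi_nhds] at hσtend
    exact fun q => hσtend q
  -- pointwise convergence on [0, T]
  have hcauchy : ∀ t ∈ Icc (0:ℝ) T, CauchySeq (fun j => Φ (σ j) t) := by
    intro t ht
    rw [Metric.cauchySeq_iff]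
    intro ε₀ hε₀
    obtain ⟨q, hq⟩ := exists_rat_near t (show (0:ℝ) < ε₀ / (4 * (M + 1)) by positivity)
    have hqc : |clamp (q:ℝ) - t| ≤ |t - (q:ℝ)| := by
      calc |clamp (q:ℝ) - t| = |clamp (q:ℝ) - clamp t| := by rw [hclamp_id t ht]
      _ ≤ |(q:ℝ) - t| := hclamp_lip _ _
      _ = |t - (q:ℝ)| := abs_sub_comm _ _
    have hclose : ∀ k, dist (Φ k t) (u k q) ≤ ε₀ / 4 := by
      intro k
      rw [dist_eq_norm]
      calc ‖Φ k t - Φ k (clamp (q:ℝ))‖ ≤ M * |t - clamp (q:ℝ)| := hΦlip k _ _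
      _ ≤ M * (ε₀ / (4 * (M + 1))) := by
          apply mul_le_mul_of_nonneg_left _ hM0.le
          rw [abs_sub_comm]
          exact le_trans hqc hq.le
      _ ≤ ε₀ / 4 := by
          rw [mul_comm, div_mul_eq_mul_div, div_le_div_iff₀ (by positivity) (by norm_num)]
          nlinarith [hε₀, hM0]
    have hc := (hcomp2 q).cauchySeq
    rw [Metric.cauchySeq_iff] at hc
    obtain ⟨N, hN⟩ := hc (ε₀ / 4) (by positivity)
    refine ⟨N, fun a ha b hb => ?_⟩
    have htri := dist_triangle4 (Φ (σ a) t) (u (σ a) q) (u (σ b) q) (Φ (σ b) t)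
    have h1 := hclose (σ a)
    have h2 := hN a ha b hb
    have h3 := hclose (σ b)
    rw [dist_comm (u (σ b) q) (Φ (σ b) t)] at htri
    linarith
  -- the pointwise limit
  have hlim : ∀ t ∈ Icc (0:ℝ) T, ∃ L, Tendsto (fun j => Φ (σ j) t) atTop (𝓝 L) :=
    fun t ht => cauchySeq_tendsto_of_complete (hcauchy t ht)
  set φ : ℝ → Euc m := fun t =>
    if hex : ∃ L, Tendsto (fun j => Φ (σ j) t) atTop (𝓝 L) then hex.choose else x with hφdef
  have hφt : ∀ t ∈ Icc (0:ℝ) T, Tendsto (fun j => Φ (σ j) t) atTop (𝓝 (φ t)) := by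
    intro t ht
    have hex := hlim t ht
    rw [hφdef]
    simp only [dif_pos hex]
    exact hex.choose_spec
  have hφ0 : φ 0 = x := by
    have h0 : (0:ℝ) ∈ Icc (0:ℝ) T := ⟨le_refl _, hT0.le⟩
    have hconst : (fun j => Φ (σ j) 0) = fun _ => x := by
      funext j; rw [hΦ]; simp
    have h1 := hφt 0 h0
    rw [hconst] at h1
    exact tendsto_nhds_unique h1 tendsto_const_nhds
  have hφr : ∀ t ∈ Icc (0:ℝ) T, φ t ∈ Metric.closedBall x r := by
    intro t ht
    rw [Metric.mem_closedBall, dist_eq_norm]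
    have htend : Tendsto (fun j => ‖Φ (σ j) t - x‖) atTop (𝓝 ‖φ t - x‖) :=
      ((hφt t ht).sub tendsto_const_nhds).norm
    apply le_of_tendsto htend
    apply Filter.Eventually.of_forall
    intro j
    calc ‖Φ (σ j) t - x‖ ≤ M * t := hΦx (σ j) t ht.1
    _ ≤ M * T := mul_le_mul_of_nonneg_left ht.2 hM0.le
    _ ≤ r := by nlinarith
  have hφlipIcc : ∀ t ∈ Icc (0:ℝ) T, ∀ s ∈ Icc (0:ℝ) T, ‖φ t - φ s‖ ≤ M * |t - s| := by
    intro t ht s hs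
    have htend : Tendsto (fun j => ‖Φ (σ j) t - Φ (σ j) s‖) atTop (𝓝 ‖φ t - φ s‖) :=
      ((hφt t ht).sub (hφt s hs)).norm
    exact le_of_tendsto htend (Filter.Eventually.of_forall fun j => hΦlip (σ j) t s)
  have hφest2 : ∀ t ∈ Icc (0:ℝ) T, ‖φ t - (x + t • v)‖ ≤ ε' * t := by
    intro t ht
    have htend : Tendsto (fun j => ‖Φ (σ j) t - (x + t • v)‖) atTop (𝓝 ‖φ t - (x + t • v)‖) :=
      ((hφt t ht).sub tendsto_const_nhds).norm
    exact le_of_tendsto htend (Filter.Eventually.of_forall fun j => hΦest (σ j) t ht.1)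
  -- continuity of the limit and of its derivative
  have hφcont : ContinuousOn φ (Icc (0:ℝ) T) := by
    intro t ht
    rw [Metric.continuousWithinAt_iff]
    intro ε₀ hε₀
    refine ⟨ε₀ / (M + 1), by positivity, fun {s} hs hst => ?_⟩
    rw [dist_eq_norm]
    calc ‖φ s - φ t‖ ≤ M * |s - t| := hφlipIcc s hs t ht
    _ ≤ M * (ε₀ / (M + 1)) := by
        apply mul_le_mul_of_nonneg_left _ hM0.le
        rw [← Real.dist_eq]
        exact hst.le
    _ < ε₀ := by
        rw [mul_comm, div_mul_eq_mul_div, div_lt_iff₀ (by positivity)]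
        nlinarith
  have hφC : ∀ t ∈ Icc (0:ℝ) T, φ t ∈ C := fun t ht => hsubC (hrball (hφr t ht))
  have hgcont : ContinuousOn (fun s => f (φ s)) (Icc (0:ℝ) T) := fun s hs =>
    (hcont (φ s) (hrball (hφr s hs))).comp_continuousWithinAt (hφcont s hs)
  -- vanishing step sizes
  have hhσ : Tendsto (fun j => h (σ j)) atTop (𝓝 0) := by
    apply squeeze_zero (f := fun j : ℕ => h (σ j)) (g := fun j : ℕ => T / ((j:ℝ) + 1))
      (fun j => (hh0 (σ j)).le)
    · intro j
      have hσj : ((j:ℕ):ℝ) ≤ ((σ j : ℕ):ℝ) := by exact_mod_cast hσmono.le_apply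
      show T / ((σ j : ℝ) + 1) ≤ T / ((j:ℝ) + 1)
      gcongr
    · have h1 : Tendsto (fun n : ℕ => T * (1 / ((n:ℝ) + 1))) atTop (𝓝 (T * 0)) :=
        tendsto_one_div_add_atTop_nhds_zero_nat.const_mul T
      simpa [mul_one_div, div_eq_mul_inv] using h1
  -- the limit satisfies the integral equation
  have hid : ∀ t ∈ Icc (0:ℝ) T, φ t = x + ∫ s in (0:ℝ)..t, f (φ s) := by
    intro t ht
    have h2 : Tendsto (fun j => ∫ s in (0:ℝ)..t, G (σ j) s) atTop
        (𝓝 (∫ s in (0:ℝ)..t, f (φ s))) := by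
      apply intervalIntegral.tendsto_integral_filter_of_dominated_convergence
        (bound := fun _ => M)
      · exact Filter.Eventually.of_forall fun j => (hGmeas (σ j)).aestronglyMeasurable
      · exact Filter.Eventually.of_forall fun j => ae_of_all _ fun s _ => hGM (σ j) s
      · exact intervalIntegrable_const
      · apply ae_of_all
        intro s hsI
        rw [Set.uIoc_of_le ht.1] at hsI
        have hsIcc : s ∈ Icc (0:ℝ) T := ⟨hsI.1.le, le_trans hsI.2 ht.2⟩
        have hnodetend : Tendsto
            (fun j => Y (σ j) (eulerIdx (h (σ j)) (σ j) s)) atTop (𝓝 (φ s)) := by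
          rw [tendsto_iff_dist_tendsto_zero]
          apply squeeze_zero (fun j => dist_nonneg)
            (g := fun j => M * h (σ j) + dist (Φ (σ j) s) (φ s))
          · intro j
            calc dist (Y (σ j) (eulerIdx (h (σ j)) (σ j) s)) (φ s)
                ≤ dist (Y (σ j) (eulerIdx (h (σ j)) (σ j) s)) (Φ (σ j) s)
                  + dist (Φ (σ j) s) (φ s) := dist_triangle _ _ _
            _ ≤ M * h (σ j) + dist (Φ (σ j) s) (φ s) := by
                apply add_le_add ?_ le_rfl
                rw [dist_comm, dist_eq_norm]
                exact hgap (σ j) s hsIcc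
          · have hd : Tendsto (fun j => dist (Φ (σ j) s) (φ s)) atTop (𝓝 0) :=
              tendsto_iff_dist_tendsto_zero.mp (hφt s hsIcc)
            have := (hhσ.const_mul M).add hd
            simpa using this
        have hcf : Tendsto f (𝓝 (φ s)) (𝓝 (f (φ s))) :=
          (hcont (φ s) (hrball (hφr s hsIcc))).tendsto
        exact hcf.comp hnodetend
    have h1 := hφt t ht
    have h3 : (fun j => Φ (σ j) t) = fun j => x + ∫ s in (0:ℝ)..t, G (σ j) s := rfl
    rw [h3] at h1
    exact tendsto_nhds_unique h1 (tendsto_const_nhds.add h2)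
  -- assemble the solution
  refine ⟨T, hT0, φ, ⟨Or.inl ⟨T, hT0.le, rfl⟩, hφC, fun s => f (φ s), ?_, ?_⟩, hφ0, ?_⟩
  · rw [ae_restrict_iff' measurableSet_Icc]
    apply ae_of_all
    intro s hs
    exact hfmem (φ s) (hrball (hφr s hs))
  · intro t ht
    constructor
    · apply ContinuousOn.intervalIntegrable
      apply hgcont.mono
      rw [Set.uIcc_of_le ht.1]
      exact fun s hs => ⟨hs.1, le_trans hs.2 ht.2⟩
    · rw [hφ0]
      exact hid t ht
  · intro t ht
    calc ‖φ t - (x + t • v)‖ ≤ ε' * t := hφest2 t ht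
    _ ≤ ε * t := mul_le_mul_of_nonneg_right (min_le_left _ _) ht.1

/-- If the closed set `K` is forward invariant for the constrained
differential inclusion `Σ`, then `F(x) ⊆ T_K(x)` for every `x ∈ ∂K ∩ int C`. -/
theorem necessity_of_tangency {n : ℕ} (F : Euc n → Set (Euc n)) (C K : Set (Euc n))
    (hSA : StandingAssumption F C) (hK : IsClosed K)
    (hInv : ForwardInvariant F C K) :
    ∀ x ∈ frontier K ∩ interior C, F x ⊆ contingentCone K x := by
  rintro x ⟨hxK, hxint⟩ v hv
  have hxKmem : x ∈ K := by
    have := frontier_subset_closure (s := K) hxK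
    rwa [hK.closure_eq] at this
  have hstep : ∀ i : ℕ, ∃ t : ℝ, (0 < t ∧ t ≤ 1 / ((i:ℝ) + 1)) ∧
      ∃ w : Euc n, ‖w - v‖ ≤ 1 / ((i:ℝ) + 1) ∧ x + t • w ∈ K := by
    intro i
    have hεi : (0:ℝ) < 1 / ((i:ℝ) + 1) := by positivity
    obtain ⟨T, hT0, φ, hsol, hφ0, hest⟩ := exists_good_solution hSA hxint hv hεi
    set t := min T (1 / ((i:ℝ) + 1)) with htdef
    have ht0 : 0 < t := lt_min hT0 hεi
    have htT : t ∈ Icc (0:ℝ) T := ⟨ht0.le, min_le_left _ _⟩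
    have hφtK : φ t ∈ K := hInv _ φ hsol (by rw [hφ0]; exact hxKmem) t htT
    refine ⟨t, ⟨ht0, min_le_right _ _⟩, t⁻¹ • (φ t - x), ?_, ?_⟩
    · have hb := hest t htT
      have hw : t⁻¹ • (φ t - x) - v = t⁻¹ • (φ t - (x + t • v)) := by
        rw [smul_sub, smul_sub]
        rw [smul_add]
        rw [inv_smul_smul₀ (ne_of_gt ht0)]
        abel
      rw [hw, norm_smul, norm_inv, Real.norm_eq_abs, abs_of_pos ht0]
      calc t⁻¹ * ‖φ t - (x + t • v)‖ ≤ t⁻¹ * (1 / ((i:ℝ) + 1) * t) := by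
            apply mul_le_mul_of_nonneg_left hb (by positivity)
      _ = 1 / ((i:ℝ) + 1) := by field_simp
    · have heq : x + t • (t⁻¹ • (φ t - x)) = φ t := by
        rw [smul_inv_smul₀ (ne_of_gt ht0)]
        abel
      rw [heq]
      exact hφtK
  choose t ht w hw hK2 using hstep
  refine ⟨t, w, fun i => (ht i).1, ?_, ?_, hK2⟩
  · apply squeeze_zero (fun i => (ht i).1.le) (fun i => (ht i).2)
    exact tendsto_one_div_add_atTop_nhds_zero_nat
  · rw [tendsto_iff_dist_tendsto_zero]
    apply squeeze_zero (fun i => dist_nonneg)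
      (g := fun i : ℕ => 1 / ((i:ℝ) + 1))
    · intro i
      rw [dist_eq_norm]
      exact hw i
    · exact tendsto_one_div_add_atTop_nhds_zero_nat
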